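/- arXiv:2603.06678 — 2 statements merged into one kernel-verified Lean document; each statement's English description precedes it below -/
import Mathlib

section
/- Under the distribution Q with q(x_1, x_2, y) = p(x_1, y) p(x_2, y) / p(y), the mutual information between the sources is bounded by each source-target mutual information: I_Q(X_1; X_2) ≤ I_p(X_i; Y) for i = 1, 2. -/
/-- Shannon entropy of a distribution `q` on a finite type (natural logarithm). -/
noncomputable def entD {α : Type} [Fintype α] (q : α → ℝ) : ℝ :=
  ∑ x, -(q x * Real.log (q x))

/-- Marginal distribution of the first two coordinates. -/
def mAB {A B C : Type} [Fintype C] (q : A × B × C → ℝ) : A × B → ℝ :=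
  fun x => ∑ c, q (x.1, x.2, c)

/-- Marginal distribution of the first and third coordinates. -/
def mAC {A B C : Type} [Fintype B] (q : A × B × C → ℝ) : A × C → ℝ :=
  fun x => ∑ b, q (x.1, b, x.2)

/-- Marginal distribution of the second and third coordinates. -/
def mBC {A B C : Type} [Fintype A] (q : A × B × C → ℝ) : B × C → ℝ :=
  fun x => ∑ a, q (a, x.1, x.2)

/-- Marginal distribution of the first coordinate. -/
def mA {A B C : Type} [Fintype B] [Fintype C] (q : A × B × C → ℝ) : A → ℝ :=
  fun a => ∑ b, ∑ c, q (a, b, c)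

/-- Marginal distribution of the second coordinate. -/
def mB {A B C : Type} [Fintype A] [Fintype C] (q : A × B × C → ℝ) : B → ℝ :=
  fun b => ∑ a, ∑ c, q (a, b, c)

/-- Marginal distribution of the third coordinate (the target). -/
def mC {A B C : Type} [Fintype A] [Fintype B] (q : A × B × C → ℝ) : C → ℝ :=
  fun c => ∑ a, ∑ b, q (a, b, c)

/-- The distribution making `X₁` and `X₂` conditionally independent given `Y`,
`q(x₁,x₂,y) = p(x₁,y) p(x₂,y) / p(y)`: the maximum entropy distribution subject to the
pairwise source-target marginal constraints. -/
noncomputable def Qstar {A B C : Type} [Fintype A] [Fintype B]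
    (p : A × B × C → ℝ) : A × B × C → ℝ :=
  fun x => mAC p (x.1, x.2.2) * mBC p (x.2.1, x.2.2) / mC p x.2.2

/-- Mutual information between the two sources `I(X₁;X₂)` under `q`. -/
noncomputable def miAB {A B C : Type} [Fintype A] [Fintype B] [Fintype C]
    (q : A × B × C → ℝ) : ℝ :=
  entD (mA q) + entD (mB q) - entD (mAB q)

/-- Mutual information `I(X₁;Y)` under `q`. -/
noncomputable def miAC {A B C : Type} [Fintype A] [Fintype B] [Fintype C]
    (q : A × B × C → ℝ) : ℝ :=
  entD (mA q) + entD (mC q) - entD (mAC q)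

/-- Mutual information `I(X₂;Y)` under `q`. -/
noncomputable def miBC {A B C : Type} [Fintype A] [Fintype B] [Fintype C]
    (q : A × B × C → ℝ) : ℝ :=
  entD (mB q) + entD (mC q) - entD (mBC q)

/-- Conditional mutual information `I(X₁;X₂|Y)` under `q`. -/
noncomputable def cmiABgC {A B C : Type} [Fintype A] [Fintype B] [Fintype C]
    (q : A × B × C → ℝ) : ℝ :=
  entD (mAC q) + entD (mBC q) - entD (mC q) - entD q

/-- Conditional mutual information `I(X₁;Y|X₂)` under `q`. -/
noncomputable def cmiACgB {A B C : Type} [Fintype A] [Fintype B] [Fintype C]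
    (q : A × B × C → ℝ) : ℝ :=
  entD (mAB q) + entD (mBC q) - entD (mB q) - entD q

/-- Coinformation `I(X₁;X₂;Y) = I(X₁;X₂) − I(X₁;X₂|Y)` under `q`. -/
noncomputable def coI {A B C : Type} [Fintype A] [Fintype B] [Fintype C]
    (q : A × B × C → ℝ) : ℝ :=
  miAB q - cmiABgC q

section Aux

lemma gibbs {X : Type} [Fintype X] {q r : X → ℝ} (hq : ∀ x, 0 ≤ q x) (hr : ∀ x, 0 ≤ r x)
    (hqr : ∀ x, 0 < q x → 0 < r x)
    (h1 : ∑ x, q x = 1) (h2 : ∑ x, r x ≤ 1) :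
    ∑ x, q x * Real.log (r x) ≤ ∑ x, q x * Real.log (q x) := by
  have key : ∀ x, q x * Real.log (r x) - q x * Real.log (q x) ≤ r x - q x := by
    intro x
    rcases eq_or_lt_of_le (hq x) with h | h
    · simp [← h]; exact hr x
    · have hrx := hqr x h
      have hdiv : 0 < r x / q x := div_pos hrx h
      have hlog : Real.log (r x / q x) ≤ r x / q x - 1 := Real.log_le_sub_one_of_pos hdiv
      have : q x * Real.log (r x / q x) ≤ q x * (r x / q x - 1) :=
        mul_le_mul_of_nonneg_left hlog h.le
      rw [Real.log_div hrx.ne' h.ne'] at this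
      calc q x * Real.log (r x) - q x * Real.log (q x)
          = q x * (Real.log (r x) - Real.log (q x)) := by ring
        _ ≤ q x * (r x / q x - 1) := this
        _ = r x - q x := by field_simp
  calc ∑ x, q x * Real.log (r x)
      = ∑ x, q x * Real.log (q x) + ∑ x, (q x * Real.log (r x) - q x * Real.log (q x)) := by
        rw [← Finset.sum_add_distrib]; apply Finset.sum_congr rfl; intros; ring
    _ ≤ ∑ x, q x * Real.log (q x) + ∑ x, (r x - q x) :=
        add_le_add (le_refl _) (Finset.sum_le_sum fun x _ => key x)
    _ ≤ ∑ x, q x * Real.log (q x) := by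
        rw [Finset.sum_sub_distrib, h1]; linarith

lemma entD_eq {α : Type} [Fintype α] (q : α → ℝ) :
    entD q = -∑ x, q x * Real.log (q x) := by
  simp [entD]

variable {A B C : Type} [Fintype A] [Fintype B] [Fintype C]

variable {q : A × B × C → ℝ}

lemma mAB_pos (h0 : ∀ x, 0 ≤ q x) {a b c} (h : 0 < q (a, b, c)) : 0 < mAB q (a, b) := by
  refine lt_of_lt_of_le h ?_
  exact Finset.single_le_sum (fun c' _ => h0 (a, b, c')) (Finset.mem_univ c)

lemma mBC_pos (h0 : ∀ x, 0 ≤ q x) {a b c} (h : 0 < q (a, b, c)) : 0 < mBC q (b, c) := by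
  refine lt_of_lt_of_le h ?_
  exact Finset.single_le_sum (fun a' _ => h0 (a', b, c)) (Finset.mem_univ a)

lemma mAC_pos (h0 : ∀ x, 0 ≤ q x) {a b c} (h : 0 < q (a, b, c)) : 0 < mAC q (a, c) := by
  refine lt_of_lt_of_le h ?_
  exact Finset.single_le_sum (fun b' _ => h0 (a, b', c)) (Finset.mem_univ b)

lemma mB_pos (h0 : ∀ x, 0 ≤ q x) {a b c} (h : 0 < q (a, b, c)) : 0 < mB q b := by
  have h1 : 0 < ∑ c', q (a, b, c') :=
    lt_of_lt_of_le h (Finset.single_le_sum (fun c' _ => h0 (a, b, c')) (Finset.mem_univ c))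
  refine lt_of_lt_of_le h1 ?_
  exact Finset.single_le_sum
    (fun a' _ => Finset.sum_nonneg fun c' _ => h0 (a', b, c')) (Finset.mem_univ a)

lemma mA_pos (h0 : ∀ x, 0 ≤ q x) {a b c} (h : 0 < q (a, b, c)) : 0 < mA q a := by
  have h1 : 0 < ∑ c', q (a, b, c') :=
    lt_of_lt_of_le h (Finset.single_le_sum (fun c' _ => h0 (a, b, c')) (Finset.mem_univ c))
  refine lt_of_lt_of_le h1 ?_
  exact Finset.single_le_sum
    (fun b' _ => Finset.sum_nonneg fun c' _ => h0 (a, b', c')) (Finset.mem_univ b)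

lemma mAB_nonneg (h0 : ∀ x, 0 ≤ q x) (x) : 0 ≤ mAB q x := Finset.sum_nonneg fun c' _ => h0 _
lemma mBC_nonneg (h0 : ∀ x, 0 ≤ q x) (x) : 0 ≤ mBC q x := Finset.sum_nonneg fun a' _ => h0 _
lemma mAC_nonneg (h0 : ∀ x, 0 ≤ q x) (x) : 0 ≤ mAC q x := Finset.sum_nonneg fun b' _ => h0 _
lemma mB_nonneg (h0 : ∀ x, 0 ≤ q x) (b) : 0 ≤ mB q b :=
  Finset.sum_nonneg fun a' _ => Finset.sum_nonneg fun c' _ => h0 _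
lemma mA_nonneg (h0 : ∀ x, 0 ≤ q x) (a) : 0 ≤ mA q a :=
  Finset.sum_nonneg fun b' _ => Finset.sum_nonneg fun c' _ => h0 _
lemma mC_nonneg (h0 : ∀ x, 0 ≤ q x) (c) : 0 ≤ mC q c :=
  Finset.sum_nonneg fun a' _ => Finset.sum_nonneg fun b' _ => h0 _

lemma sum_mB_eq (q : A × B × C → ℝ) (h1 : ∑ x, q x = 1) : ∑ b, mB q b = 1 := by
  rw [← h1, Fintype.sum_prod_type]
  simp only [Fintype.sum_prod_type, mB]
  rw [Finset.sum_comm]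

lemma sum_sum_div {α β : Type} [Fintype α] [Fintype β] (u : α → ℝ) (v : β → ℝ) (w : ℝ) :
    ∑ a, ∑ c, u a * v c / w = (∑ a, u a) * (∑ c, v c) / w := by
  rw [Finset.sum_mul_sum, Finset.sum_div]
  exact Finset.sum_congr rfl fun a _ => by rw [Finset.sum_div]

lemma self_mul_self_div_le (w : ℝ) (hw : 0 ≤ w) : w * w / w ≤ w := by
  rcases eq_or_lt_of_le hw with h | h
  · simp [← h]
  · rw [mul_div_assoc, div_self h.ne', mul_one]

lemma cmi_B_nonneg (q : A × B × C → ℝ) (h0 : ∀ x, 0 ≤ q x) (h1 : ∑ x, q x = 1) :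
    entD (mB q) + entD q ≤ entD (mAB q) + entD (mBC q) := by
  set r : A × B × C → ℝ :=
    fun x => mAB q (x.1, x.2.1) * mBC q (x.2.1, x.2.2) / mB q x.2.1 with hr_def
  have hr : ∀ x, 0 ≤ r x := fun x =>
    div_nonneg (mul_nonneg (mAB_nonneg h0 _) (mBC_nonneg h0 _)) (mB_nonneg h0 _)
  have hqr : ∀ x, 0 < q x → 0 < r x := by
    rintro ⟨a, b, c⟩ h
    exact div_pos (mul_pos (mAB_pos h0 h) (mBC_pos h0 h)) (mB_pos h0 h)
  have hsumBC : ∀ b, ∑ c, mBC q (b, c) = mB q b := by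
    intro b; simp only [mBC, mB]; rw [Finset.sum_comm]
  have h2 : ∑ x, r x ≤ 1 := by
    have e : ∑ x, r x = ∑ b, (mB q b * mB q b / mB q b) := by
      simp only [Fintype.sum_prod_type, hr_def]
      rw [Finset.sum_comm]
      refine Finset.sum_congr rfl fun b _ => ?_
      rw [sum_sum_div (fun a => mAB q (a, b)) (fun c => mBC q (b, c)) (mB q b), hsumBC b]
      rfl
    rw [e, ← sum_mB_eq q h1]
    exact Finset.sum_le_sum fun b _ => self_mul_self_div_le _ (mB_nonneg h0 b)
  have hlog : ∀ x, q x * Real.log (r x)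
      = q x * Real.log (mAB q (x.1, x.2.1)) + q x * Real.log (mBC q (x.2.1, x.2.2))
        - q x * Real.log (mB q x.2.1) := by
    rintro ⟨a, b, c⟩
    rcases eq_or_lt_of_le (h0 (a, b, c)) with h | h
    · simp [← h]
    · have hu := mAB_pos h0 h
      have hv := mBC_pos h0 h
      have hw := mB_pos h0 h
      simp only [hr_def]
      rw [Real.log_div (mul_pos hu hv).ne' hw.ne', Real.log_mul hu.ne' hv.ne']
      ring
  have S1 : ∑ x, q x * Real.log (mAB q (x.1, x.2.1))
      = ∑ y : A × B, mAB q y * Real.log (mAB q y) := by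
    simp only [Fintype.sum_prod_type]
    refine Finset.sum_congr rfl fun a _ => Finset.sum_congr rfl fun b _ => ?_
    rw [← Finset.sum_mul]; rfl
  have S2 : ∑ x, q x * Real.log (mBC q (x.2.1, x.2.2))
      = ∑ y : B × C, mBC q y * Real.log (mBC q y) := by
    simp only [Fintype.sum_prod_type]
    rw [Finset.sum_comm]
    refine Finset.sum_congr rfl fun b _ => ?_
    rw [Finset.sum_comm]
    refine Finset.sum_congr rfl fun c _ => ?_
    rw [← Finset.sum_mul]; rfl
  have S3 : ∑ x, q x * Real.log (mB q x.2.1)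
      = ∑ b, mB q b * Real.log (mB q b) := by
    simp only [Fintype.sum_prod_type]
    rw [Finset.sum_comm]
    refine Finset.sum_congr rfl fun b _ => ?_
    simp_rw [← Finset.sum_mul]
    rfl
  have split : ∑ x, q x * Real.log (r x)
      = (∑ y : A × B, mAB q y * Real.log (mAB q y))
        + (∑ y : B × C, mBC q y * Real.log (mBC q y))
        - ∑ b, mB q b * Real.log (mB q b) := by
    rw [← S1, ← S2, ← S3, ← Finset.sum_add_distrib, ← Finset.sum_sub_distrib]
    exact Finset.sum_congr rfl fun x _ => hlog x
  have main := gibbs h0 hr hqr h1 h2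
  rw [split] at main
  rw [entD_eq, entD_eq, entD_eq, entD_eq]
  linarith

lemma sum_mA_eq (q : A × B × C → ℝ) (h1 : ∑ x, q x = 1) : ∑ a, mA q a = 1 := by
  rw [← h1]
  simp only [Fintype.sum_prod_type, mA]

lemma cmi_A_nonneg (q : A × B × C → ℝ) (h0 : ∀ x, 0 ≤ q x) (h1 : ∑ x, q x = 1) :
    entD (mA q) + entD q ≤ entD (mAB q) + entD (mAC q) := by
  set r : A × B × C → ℝ :=
    fun x => mAB q (x.1, x.2.1) * mAC q (x.1, x.2.2) / mA q x.1 with hr_def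
  have hr : ∀ x, 0 ≤ r x := fun x =>
    div_nonneg (mul_nonneg (mAB_nonneg h0 _) (mAC_nonneg h0 _)) (mA_nonneg h0 _)
  have hqr : ∀ x, 0 < q x → 0 < r x := by
    rintro ⟨a, b, c⟩ h
    exact div_pos (mul_pos (mAB_pos h0 h) (mAC_pos h0 h)) (mA_pos h0 h)
  have hsumAC : ∀ a, ∑ c, mAC q (a, c) = mA q a := by
    intro a; simp only [mAC, mA]; rw [Finset.sum_comm]
  have h2 : ∑ x, r x ≤ 1 := by
    have e : ∑ x, r x = ∑ a, (mA q a * mA q a / mA q a) := by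
      simp only [Fintype.sum_prod_type, hr_def]
      refine Finset.sum_congr rfl fun a _ => ?_
      rw [sum_sum_div (fun b => mAB q (a, b)) (fun c => mAC q (a, c)) (mA q a), hsumAC a]
      rfl
    rw [e, ← sum_mA_eq q h1]
    exact Finset.sum_le_sum fun a _ => self_mul_self_div_le _ (mA_nonneg h0 a)
  have hlog : ∀ x, q x * Real.log (r x)
      = q x * Real.log (mAB q (x.1, x.2.1)) + q x * Real.log (mAC q (x.1, x.2.2))
        - q x * Real.log (mA q x.1) := by
    rintro ⟨a, b, c⟩
    rcases eq_or_lt_of_le (h0 (a, b, c)) with h | h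
    · simp [← h]
    · have hu := mAB_pos h0 h
      have hv := mAC_pos h0 h
      have hw := mA_pos h0 h
      simp only [hr_def]
      rw [Real.log_div (mul_pos hu hv).ne' hw.ne', Real.log_mul hu.ne' hv.ne']
      ring
  have S1 : ∑ x, q x * Real.log (mAB q (x.1, x.2.1))
      = ∑ y : A × B, mAB q y * Real.log (mAB q y) := by
    simp only [Fintype.sum_prod_type]
    refine Finset.sum_congr rfl fun a _ => Finset.sum_congr rfl fun b _ => ?_
    rw [← Finset.sum_mul]; rfl
  have S2 : ∑ x, q x * Real.log (mAC q (x.1, x.2.2))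
      = ∑ y : A × C, mAC q y * Real.log (mAC q y) := by
    simp only [Fintype.sum_prod_type]
    refine Finset.sum_congr rfl fun a _ => ?_
    rw [Finset.sum_comm]
    refine Finset.sum_congr rfl fun c _ => ?_
    rw [← Finset.sum_mul]; rfl
  have S3 : ∑ x, q x * Real.log (mA q x.1)
      = ∑ a, mA q a * Real.log (mA q a) := by
    simp only [Fintype.sum_prod_type]
    refine Finset.sum_congr rfl fun a _ => ?_
    simp_rw [← Finset.sum_mul]
    rfl
  have split : ∑ x, q x * Real.log (r x)
      = (∑ y : A × B, mAB q y * Real.log (mAB q y))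
        + (∑ y : A × C, mAC q y * Real.log (mAC q y))
        - ∑ a, mA q a * Real.log (mA q a) := by
    rw [← S1, ← S2, ← S3, ← Finset.sum_add_distrib, ← Finset.sum_sub_distrib]
    exact Finset.sum_congr rfl fun x _ => hlog x
  have main := gibbs h0 hr hqr h1 h2
  rw [split] at main
  rw [entD_eq, entD_eq, entD_eq, entD_eq]
  linarith

section Q
variable (p : A × B × C → ℝ)

lemma sum_mAC_over_A (c : C) : ∑ a, mAC p (a, c) = mC p c := rfl

lemma sum_mBC_over_B (c : C) : ∑ b, mBC p (b, c) = mC p c := by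
  simp only [mBC, mC]; rw [Finset.sum_comm]

lemma Qstar_nonneg (hpos : ∀ x, 0 ≤ p x) (hC : ∀ c, 0 < mC p c) (x : A × B × C) :
    0 ≤ Qstar p x :=
  div_nonneg (mul_nonneg (mAC_nonneg hpos _) (mBC_nonneg hpos _)) (hC _).le

lemma mAC_Qstar (hC : ∀ c, 0 < mC p c) : mAC (Qstar p) = mAC p := by
  funext y
  obtain ⟨a, c⟩ := y
  show ∑ b, mAC p (a, c) * mBC p (b, c) / mC p c = mAC p (a, c)
  rw [← Finset.sum_div, ← Finset.mul_sum, sum_mBC_over_B, mul_div_assoc,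
    div_self (hC c).ne', mul_one]

lemma mBC_Qstar (hC : ∀ c, 0 < mC p c) : mBC (Qstar p) = mBC p := by
  funext y
  obtain ⟨b, c⟩ := y
  show ∑ a, mAC p (a, c) * mBC p (b, c) / mC p c = mBC p (b, c)
  rw [← Finset.sum_div, ← Finset.sum_mul, sum_mAC_over_A, mul_comm, mul_div_assoc,
    div_self (hC c).ne', mul_one]

lemma mC_Qstar (hC : ∀ c, 0 < mC p c) : mC (Qstar p) = mC p := by
  funext c
  show ∑ a, mAC (Qstar p) (a, c) = mC p c
  rw [mAC_Qstar p hC]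
  exact sum_mAC_over_A p c

lemma mA_Qstar (hC : ∀ c, 0 < mC p c) : mA (Qstar p) = mA p := by
  funext a
  show ∑ b, ∑ c, Qstar p (a, b, c) = mA p a
  rw [Finset.sum_comm]
  calc ∑ c, ∑ b, Qstar p (a, b, c) = ∑ c, mAC (Qstar p) (a, c) := rfl
    _ = ∑ c, mAC p (a, c) := by rw [mAC_Qstar p hC]
    _ = ∑ c, ∑ b, p (a, b, c) := rfl
    _ = mA p a := Finset.sum_comm

lemma mB_Qstar (hC : ∀ c, 0 < mC p c) : mB (Qstar p) = mB p := by
  funext b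
  show ∑ a, ∑ c, Qstar p (a, b, c) = mB p b
  rw [Finset.sum_comm]
  calc ∑ c, ∑ a, Qstar p (a, b, c) = ∑ c, mBC (Qstar p) (b, c) := rfl
    _ = ∑ c, mBC p (b, c) := by rw [mBC_Qstar p hC]
    _ = ∑ c, ∑ a, p (a, b, c) := rfl
    _ = mB p b := Finset.sum_comm

lemma sum_mC_eq (q : A × B × C → ℝ) : ∑ c, mC q c = ∑ x, q x := by
  simp only [Fintype.sum_prod_type, mC]
  rw [Finset.sum_comm]
  exact Finset.sum_congr rfl fun a _ => Finset.sum_comm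

lemma Qstar_sum (hsum : ∑ x, p x = 1) (hC : ∀ c, 0 < mC p c) :
    ∑ x, Qstar p x = 1 := by
  rw [← sum_mC_eq, mC_Qstar p hC, sum_mC_eq, hsum]

lemma entD_Qstar (hpos : ∀ x, 0 ≤ p x) (hC : ∀ c, 0 < mC p c) :
    entD (Qstar p) = entD (mAC p) + entD (mBC p) - entD (mC p) := by
  set q := Qstar p with hq_def
  have h0 : ∀ x, 0 ≤ q x := Qstar_nonneg p hpos hC
  have hmac : ∀ a c, ∑ b, q (a, b, c) = mAC p (a, c) :=
    fun a c => congrFun (mAC_Qstar p hC) (a, c)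
  have hmbc : ∀ b c, ∑ a, q (a, b, c) = mBC p (b, c) :=
    fun b c => congrFun (mBC_Qstar p hC) (b, c)
  have hmc : ∀ c, ∑ a, ∑ b, q (a, b, c) = mC p c :=
    fun c => congrFun (mC_Qstar p hC) c
  have hlog : ∀ x, q x * Real.log (q x)
      = q x * Real.log (mAC p (x.1, x.2.2)) + q x * Real.log (mBC p (x.2.1, x.2.2))
        - q x * Real.log (mC p x.2.2) := by
    rintro ⟨a, b, c⟩
    rcases eq_or_lt_of_le (h0 (a, b, c)) with h | h
    · simp [← h]
    · have hw := hC c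
      have hq' : q (a, b, c) = mAC p (a, c) * mBC p (b, c) / mC p c := rfl
      have hu : mAC p (a, c) ≠ 0 := by
        intro h'; rw [hq', h'] at h; simp at h
      have hv : mBC p (b, c) ≠ 0 := by
        intro h'; rw [hq', h'] at h; simp at h
      have : Real.log (q (a, b, c))
          = Real.log (mAC p (a, c)) + Real.log (mBC p (b, c)) - Real.log (mC p c) := by
        rw [hq', Real.log_div (mul_ne_zero hu hv) hw.ne', Real.log_mul hu hv]
      rw [this]; ring
  have T1 : ∑ x, q x * Real.log (mAC p (x.1, x.2.2))
      = ∑ y : A × C, mAC p y * Real.log (mAC p y) := by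
    simp only [Fintype.sum_prod_type]
    refine Finset.sum_congr rfl fun a _ => ?_
    rw [Finset.sum_comm]
    refine Finset.sum_congr rfl fun c _ => ?_
    rw [← Finset.sum_mul, hmac a c]
  have T2 : ∑ x, q x * Real.log (mBC p (x.2.1, x.2.2))
      = ∑ y : B × C, mBC p y * Real.log (mBC p y) := by
    simp only [Fintype.sum_prod_type]
    rw [Finset.sum_comm]
    refine Finset.sum_congr rfl fun b _ => ?_
    rw [Finset.sum_comm]
    refine Finset.sum_congr rfl fun c _ => ?_
    rw [← Finset.sum_mul, hmbc b c]
  have T3 : ∑ x, q x * Real.log (mC p x.2.2)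
      = ∑ c, mC p c * Real.log (mC p c) := by
    simp only [Fintype.sum_prod_type]
    have e : ∀ a, ∑ b, ∑ c, q (a, b, c) * Real.log (mC p c)
        = ∑ c, ∑ b, q (a, b, c) * Real.log (mC p c) := fun a => Finset.sum_comm
    simp_rw [e]
    rw [Finset.sum_comm]
    refine Finset.sum_congr rfl fun c _ => ?_
    simp_rw [← Finset.sum_mul]
    rw [hmc c]
  have split : ∑ x, q x * Real.log (q x)
      = (∑ y : A × C, mAC p y * Real.log (mAC p y))
        + (∑ y : B × C, mBC p y * Real.log (mBC p y))
        - ∑ c, mC p c * Real.log (mC p c) := by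
    rw [← T1, ← T2, ← T3, ← Finset.sum_add_distrib, ← Finset.sum_sub_distrib]
    exact Finset.sum_congr rfl fun x _ => hlog x
  rw [entD_eq, entD_eq, entD_eq, entD_eq, split]
  ring
end Q

end Aux

/-- Under the distribution `Q` with
`q(x₁,x₂,y) = p(x₁,y)p(x₂,y)/p(y)`, the mutual information between the sources is bounded
by each source-target mutual information of `p`:
`I_Q(X₁;X₂) ≤ I_p(Xᵢ;Y)` for `i = 1, 2`. -/
theorem source_mutual_information_under_Qstar_le_marginal_mutual_information
    {A B C : Type} [Fintype A] [Fintype B] [Fintype C]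
    (p : A × B × C → ℝ) (hpos : ∀ x, 0 ≤ p x) (hsum : ∑ x, p x = 1)
    (hC : ∀ c, 0 < mC p c) :
    miAB (Qstar p) ≤ miAC p ∧ miAB (Qstar p) ≤ miBC p := by
  set q := Qstar p with hq
  have h0 : ∀ x, 0 ≤ q x := Qstar_nonneg p hpos hC
  have h1 : ∑ x, q x = 1 := Qstar_sum p hsum hC
  have eA : entD (mA q) = entD (mA p) := by rw [hq, mA_Qstar p hC]
  have eB : entD (mB q) = entD (mB p) := by rw [hq, mB_Qstar p hC]
  have eC : entD (mC q) = entD (mC p) := by rw [hq, mC_Qstar p hC]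
  have eAC : entD (mAC q) = entD (mAC p) := by rw [hq, mAC_Qstar p hC]
  have eBC : entD (mBC q) = entD (mBC p) := by rw [hq, mBC_Qstar p hC]
  have eQ : entD q = entD (mAC p) + entD (mBC p) - entD (mC p) := entD_Qstar p hpos hC
  have c1 := cmi_B_nonneg q h0 h1
  have c2 := cmi_A_nonneg q h0 h1
  constructor <;> simp only [miAB, miAC, miBC] <;> linarith
end

section
/- The Rescaled Redundancy I_RR satisfies Global Positivity and is bounded above by the minimum marginal mutual information: 0 ≤ I_RR(X_1, X_2; Y) ≤ min(I(X_1; Y), I(X_2; Y)). -/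
/-- A (finite, discrete) random variable on the finite sample space `Ω`,
with values encoded as natural numbers. -/
abbrev RV (Ω : Type) := Ω → ℕ

/-- `p` is a probability mass function on `Ω`. -/
def IsPMF {Ω : Type} [Fintype Ω] (p : Ω → ℝ) : Prop :=
  (∀ ω, 0 ≤ p ω) ∧ ∑ ω, p ω = 1

/-- Probability that the random variable `X` takes the value `v`. -/
noncomputable def prob {Ω α : Type} [Fintype Ω] [DecidableEq α]
    (p : Ω → ℝ) (X : Ω → α) (v : α) : ℝ :=
  ∑ ω ∈ Finset.univ.filter (fun ω => X ω = v), p ω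

/-- Shannon entropy of the random variable `X` under the distribution `p`. -/
noncomputable def ent {Ω α : Type} [Fintype Ω] [DecidableEq α]
    (p : Ω → ℝ) (X : Ω → α) : ℝ :=
  ∑ v ∈ Finset.image X Finset.univ, -(prob p X v * Real.log (prob p X v))

/-- Shannon mutual information `I(X;Y)` under the distribution `p`. -/
noncomputable def MI {Ω α β : Type} [Fintype Ω] [DecidableEq α] [DecidableEq β]
    (p : Ω → ℝ) (X : Ω → α) (Y : Ω → β) : ℝ :=
  ent p X + ent p Y - ent p (fun ω => (X ω, Y ω))

/-- The joint random variable `(X,Y)`, encoded back into `ℕ` via the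
injective pairing function `Nat.pair`. -/
def joint {Ω : Type} (X Y : RV Ω) : RV Ω := fun ω => Nat.pair (X ω) (Y ω)

/-- Coinformation `I(X₁;X₂;Y) = I(X₁;Y) + I(X₂;Y) − I(X₁,X₂;Y)`. -/
noncomputable def coi {Ω : Type} [Fintype Ω] (p : Ω → ℝ) (X₁ X₂ Y : RV Ω) : ℝ :=
  MI p X₁ Y + MI p X₂ Y - MI p (joint X₁ X₂) Y

/-- `R_min = max(0, I(X₁;X₂;Y))`. -/
noncomputable def Rmin {Ω : Type} [Fintype Ω] (p : Ω → ℝ) (X₁ X₂ Y : RV Ω) : ℝ :=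
  max 0 (coi p X₁ X₂ Y)

/-- `R_MMI = min(I(X₁;Y), I(X₂;Y))`. -/
noncomputable def RMMI {Ω : Type} [Fintype Ω] (p : Ω → ℝ) (X₁ X₂ Y : RV Ω) : ℝ :=
  min (MI p X₁ Y) (MI p X₂ Y)

/-- Normalised source dependency `I_s = I(X₁;X₂) / min(H(X₁),H(X₂))`. -/
noncomputable def Isrc {Ω : Type} [Fintype Ω] (p : Ω → ℝ) (X₁ X₂ : RV Ω) : ℝ :=
  MI p X₁ X₂ / min (ent p X₁) (ent p X₂)

/-- The Rescaled Redundancy `I_RR = R_min + I_s (R_MMI − R_min)`. -/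
noncomputable def IRR {Ω : Type} [Fintype Ω] (p : Ω → ℝ) (X₁ X₂ Y : RV Ω) : ℝ :=
  Rmin p X₁ X₂ Y + Isrc p X₁ X₂ * (RMMI p X₁ X₂ Y - Rmin p X₁ X₂ Y)


section Aux
variable {Ω α β γ : Type} [Fintype Ω] [DecidableEq α] [DecidableEq β] [DecidableEq γ]
variable (p : Ω → ℝ)
lemma prob_nonneg (hp : ∀ ω, 0 ≤ p ω) (X : Ω → α) (v : α) : 0 ≤ prob p X v :=
  Finset.sum_nonneg fun ω _ => hp ω

lemma le_prob (hp : ∀ ω, 0 ≤ p ω) (X : Ω → α) (ω : Ω) : p ω ≤ prob p X (X ω) :=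
  Finset.single_le_sum (fun i _ => hp i) (by simp)

lemma prob_eq_zero_of_not_mem (X : Ω → α) {v : α} (hv : v ∉ Finset.image X Finset.univ) :
    prob p X v = 0 := by
  unfold prob
  rw [Finset.sum_eq_zero]
  intro ω hω
  exact absurd (Finset.mem_image.mpr ⟨ω, Finset.mem_univ ω, (Finset.mem_filter.mp hω).2⟩) hv

lemma sum_prob (hp : IsPMF p) (X : Ω → α) :
    ∑ v ∈ Finset.image X Finset.univ, prob p X v = 1 := by
  rw [← hp.2]
  exact Finset.sum_fiberwise_of_maps_to (fun ω _ => Finset.mem_image_of_mem X (Finset.mem_univ ω)) p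

lemma ent_eq (X : Ω → α) : ent p X = ∑ ω, -(p ω * Real.log (prob p X (X ω))) := by
  rw [← Finset.sum_fiberwise_of_maps_to
      (fun ω (_ : ω ∈ Finset.univ) => Finset.mem_image_of_mem X (Finset.mem_univ ω))
      (fun ω => -(p ω * Real.log (prob p X (X ω))))]
  refine Finset.sum_congr rfl fun v hv => ?_
  rw [show (prob p X v * Real.log (prob p X v)) =
      ∑ ω ∈ Finset.univ.filter (fun ω => X ω = v), p ω * Real.log (prob p X (X ω)) from ?_]
  · rw [← Finset.sum_neg_distrib]
  · rw [prob, Finset.sum_mul]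
    exact Finset.sum_congr rfl fun ω hω => by rw [(Finset.mem_filter.mp hω).2]; rfl

lemma prob_congr {X : Ω → α} {X' : Ω → β}
    (h : ∀ ω₁ ω₂, X ω₁ = X ω₂ ↔ X' ω₁ = X' ω₂) (ω : Ω) :
    prob p X (X ω) = prob p X' (X' ω) := by
  unfold prob
  congr 1
  ext ω'
  simp [h ω' ω]

lemma ent_congr {X : Ω → α} {X' : Ω → β}
    (h : ∀ ω₁ ω₂, X ω₁ = X ω₂ ↔ X' ω₁ = X' ω₂) :
    ent p X = ent p X' := by
  rw [ent_eq, ent_eq]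
  exact Finset.sum_congr rfl fun ω _ => by rw [prob_congr p h ω]

lemma prob_pair_le_left (hp : ∀ ω, 0 ≤ p ω) (X : Ω → α) (Y : Ω → β) (ω : Ω) :
    prob p (fun ω => (X ω, Y ω)) (X ω, Y ω) ≤ prob p X (X ω) := by
  refine Finset.sum_le_sum_of_subset_of_nonneg ?_ (fun i _ _ => hp i)
  intro ω' hω'
  simp only [Finset.mem_filter, Finset.mem_univ, true_and, Prod.mk.injEq] at *
  exact hω'.1

lemma ent_mono_left (hp : ∀ ω, 0 ≤ p ω) (X : Ω → α) (Y : Ω → β) :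
    ent p X ≤ ent p (fun ω => (X ω, Y ω)) := by
  rw [ent_eq, ent_eq]
  refine Finset.sum_le_sum fun ω _ => ?_
  rcases eq_or_lt_of_le (hp ω) with h0 | h0
  · simp [← h0]
  · have hXY : (0:ℝ) < prob p (fun ω => (X ω, Y ω)) (X ω, Y ω) :=
      lt_of_lt_of_le h0 (le_prob p hp _ ω)
    have := Real.log_le_log hXY (prob_pair_le_left p hp X Y ω)
    nlinarith

/-- Master Gibbs-type inequality: `∑ p ω log (f ω) ≤ 0` when `∑ p ω * f ω ≤ 1`. -/
lemma gibbs_s17 (hp : IsPMF p) (f : Ω → ℝ) (hf : ∀ ω, 0 < p ω → 0 < f ω)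
    (hs : ∑ ω, p ω * f ω ≤ 1) : ∑ ω, p ω * Real.log (f ω) ≤ 0 := by
  have h1 : ∑ ω, p ω * Real.log (f ω) ≤ ∑ ω, p ω * (f ω - 1) := by
    refine Finset.sum_le_sum fun ω _ => ?_
    rcases eq_or_lt_of_le (hp.1 ω) with h0 | h0
    · simp [← h0]
    · exact mul_le_mul_of_nonneg_left (Real.log_le_sub_one_of_pos (hf ω h0)) h0.le
  have h2 : ∑ ω, p ω * (f ω - 1) = (∑ ω, p ω * f ω) - 1 := by
    simp [mul_sub, Finset.sum_sub_distrib, hp.2]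
  linarith


/-- Marginalization: summing the joint pmf over the first coordinate's image. -/
lemma marginal_left (X : Ω → α) (Y : Ω → β) (b : β) :
    ∑ a ∈ Finset.image X Finset.univ, prob p (fun ω => (X ω, Y ω)) (a, b)
      = prob p Y b := by
  unfold prob
  rw [show (Finset.univ.filter (fun ω => Y ω = b))
      = Finset.univ.filter (fun ω => Y ω = b) from rfl]
  rw [← Finset.sum_fiberwise_of_maps_to
      (s := Finset.univ.filter (fun ω => Y ω = b)) (g := X)
      (t := Finset.image X Finset.univ)
      (fun ω _ => Finset.mem_image_of_mem X (Finset.mem_univ ω)) p]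
  refine Finset.sum_congr rfl fun a _ => ?_
  congr 1
  ext ω
  simp [Prod.ext_iff, and_comm]

lemma marginal_right (X : Ω → α) (Y : Ω → β) (a : α) :
    ∑ b ∈ Finset.image Y Finset.univ, prob p (fun ω => (X ω, Y ω)) (a, b)
      = prob p X a := by
  unfold prob
  rw [← Finset.sum_fiberwise_of_maps_to
      (s := Finset.univ.filter (fun ω => X ω = a)) (g := Y)
      (t := Finset.image Y Finset.univ)
      (fun ω _ => Finset.mem_image_of_mem Y (Finset.mem_univ ω)) p]
  refine Finset.sum_congr rfl fun b _ => ?_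
  congr 1
  ext ω
  simp [Prod.ext_iff]

/-- Subadditivity: `H(X,Y) ≤ H(X) + H(Y)`. -/
lemma ent_pair_le (hp : IsPMF p) (X : Ω → α) (Y : Ω → β) :
    ent p (fun ω => (X ω, Y ω)) ≤ ent p X + ent p Y := by
  set PX := prob p X
  set PY := prob p Y
  set PXY := prob p (fun ω => (X ω, Y ω))
  have key : ∑ ω, p ω * Real.log (PX (X ω) * PY (Y ω) / PXY (X ω, Y ω)) ≤ 0 := by
    refine gibbs_s17 p hp _ (fun ω hω => ?_) ?_
    · have h1 : 0 < PX (X ω) := lt_of_lt_of_le hω (le_prob p hp.1 X ω)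
      have h2 : 0 < PY (Y ω) := lt_of_lt_of_le hω (le_prob p hp.1 Y ω)
      have h3 : 0 < PXY (X ω, Y ω) := lt_of_lt_of_le hω (le_prob p hp.1 _ ω)
      positivity
    · -- reorganize the sum by the value of (X ω, Y ω)
      rw [← Finset.sum_fiberwise_of_maps_to
          (s := Finset.univ) (g := fun ω => (X ω, Y ω))
          (t := Finset.image (fun ω => (X ω, Y ω)) Finset.univ)
          (fun ω _ => Finset.mem_image_of_mem _ (Finset.mem_univ ω))
          (fun ω => p ω * (PX (X ω) * PY (Y ω) / PXY (X ω, Y ω)))]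
      have step1 : ∀ v ∈ Finset.image (fun ω => (X ω, Y ω)) Finset.univ,
          ∑ ω ∈ Finset.univ.filter (fun ω => (X ω, Y ω) = v),
            p ω * (PX (X ω) * PY (Y ω) / PXY (X ω, Y ω))
          ≤ PX v.1 * PY v.2 := by
        intro v hv
        have heq : ∑ ω ∈ Finset.univ.filter (fun ω => (X ω, Y ω) = v),
            p ω * (PX (X ω) * PY (Y ω) / PXY (X ω, Y ω))
            = (∑ ω ∈ Finset.univ.filter (fun ω => (X ω, Y ω) = v), p ω)
                * (PX v.1 * PY v.2 / PXY v) := by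
          rw [Finset.sum_mul]
          refine Finset.sum_congr rfl fun ω hω => ?_
          have h := (Finset.mem_filter.mp hω).2
          have hx : X ω = v.1 := by rw [← h]
          have hy : Y ω = v.2 := by rw [← h]
          rw [h, hx, hy]
        have hPXYv : PXY v = ∑ ω ∈ Finset.univ.filter (fun ω => (X ω, Y ω) = v), p ω := rfl
        rw [heq, ← hPXYv]
        rcases eq_or_lt_of_le (prob_nonneg p hp.1 (fun ω => (X ω, Y ω)) v : (0:ℝ) ≤ PXY v)
          with h0 | h0
        · have h0' : PXY v = 0 := h0.symm
          rw [h0']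
          simpa using mul_nonneg (prob_nonneg p hp.1 X v.1) (prob_nonneg p hp.1 Y v.2)
        · rw [mul_div_assoc', mul_comm, mul_div_assoc, div_self (ne_of_gt h0), mul_one]
      calc ∑ v ∈ Finset.image (fun ω => (X ω, Y ω)) Finset.univ,
            ∑ ω ∈ Finset.univ.filter (fun ω => (X ω, Y ω) = v),
              p ω * (PX (X ω) * PY (Y ω) / PXY (X ω, Y ω))
          ≤ ∑ v ∈ Finset.image (fun ω => (X ω, Y ω)) Finset.univ, PX v.1 * PY v.2 :=
            Finset.sum_le_sum step1
        _ ≤ ∑ v ∈ (Finset.image X Finset.univ) ×ˢ (Finset.image Y Finset.univ),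
              PX v.1 * PY v.2 := by
            refine Finset.sum_le_sum_of_subset_of_nonneg ?_ (fun v _ _ =>
              mul_nonneg (prob_nonneg p hp.1 X v.1) (prob_nonneg p hp.1 Y v.2))
            intro v hv
            obtain ⟨ω, _, hω⟩ := Finset.mem_image.mp hv
            rw [← hω]
            exact Finset.mk_mem_product (Finset.mem_image_of_mem X (Finset.mem_univ ω))
              (Finset.mem_image_of_mem Y (Finset.mem_univ ω))
        _ = 1 := by
            rw [Finset.sum_product]
            simp only [← Finset.mul_sum]
            rw [← Finset.sum_mul, sum_prob p hp X, sum_prob p hp Y, one_mul]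
  -- convert to entropies
  rw [ent_eq, ent_eq, ent_eq]
  rw [← sub_nonpos]
  have : ∑ ω, -(p ω * Real.log (PX (X ω))) + ∑ ω, -(p ω * Real.log (PY (Y ω)))
      - ∑ ω, -(p ω * Real.log (PXY (X ω, Y ω)))
      = -∑ ω, p ω * Real.log (PX (X ω) * PY (Y ω) / PXY (X ω, Y ω)) := by
    rw [← Finset.sum_add_distrib, ← Finset.sum_sub_distrib, ← Finset.sum_neg_distrib]
    refine Finset.sum_congr rfl fun ω _ => ?_
    rcases eq_or_lt_of_le (hp.1 ω) with h0 | h0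
    · rw [← h0]; ring
    · have h1 : 0 < PX (X ω) := lt_of_lt_of_le h0 (le_prob p hp.1 X ω)
      have h2 : 0 < PY (Y ω) := lt_of_lt_of_le h0 (le_prob p hp.1 Y ω)
      have h3 : 0 < PXY (X ω, Y ω) := lt_of_lt_of_le h0 (le_prob p hp.1 _ ω)
      rw [Real.log_div (by positivity) (ne_of_gt h3), Real.log_mul (ne_of_gt h1) (ne_of_gt h2)]
      ring
  linarith [neg_nonneg.mpr key, this]

/-- Strong subadditivity: `H(X₂) + H(X₁,X₂,Y) ≤ H(X₁,X₂) + H(X₂,Y)`. -/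
lemma ent_ssa (hp : IsPMF p) (X₁ : Ω → α) (X₂ : Ω → β) (Y : Ω → γ) :
    ent p X₂ + ent p (fun ω => ((X₁ ω, X₂ ω), Y ω))
      ≤ ent p (fun ω => (X₁ ω, X₂ ω)) + ent p (fun ω => (X₂ ω, Y ω)) := by
  set P2 := prob p X₂ with hP2def
  set P12 := prob p (fun ω => (X₁ ω, X₂ ω)) with hP12def
  set P2Y := prob p (fun ω => (X₂ ω, Y ω)) with hP2Ydef
  set PT := prob p (fun ω => ((X₁ ω, X₂ ω), Y ω)) with hPTdef
  have hg0 : ∀ t : (α × β) × γ, (0:ℝ) ≤ P12 t.1 * P2Y (t.1.2, t.2) / P2 t.1.2 := fun t =>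
    div_nonneg (mul_nonneg (prob_nonneg p hp.1 _ t.1) (prob_nonneg p hp.1 _ (t.1.2, t.2)))
      (prob_nonneg p hp.1 _ t.1.2)
  have key : ∑ ω, p ω * Real.log
      (P12 (X₁ ω, X₂ ω) * P2Y (X₂ ω, Y ω) / (P2 (X₂ ω) * PT ((X₁ ω, X₂ ω), Y ω))) ≤ 0 := by
    refine gibbs_s17 p hp _ (fun ω hω => ?_) ?_
    · have h1 : 0 < P12 (X₁ ω, X₂ ω) := lt_of_lt_of_le hω (le_prob p hp.1 _ ω)
      have h2 : 0 < P2Y (X₂ ω, Y ω) := lt_of_lt_of_le hω (le_prob p hp.1 _ ω)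
      have h3 : 0 < P2 (X₂ ω) := lt_of_lt_of_le hω (le_prob p hp.1 _ ω)
      have h4 : 0 < PT ((X₁ ω, X₂ ω), Y ω) := lt_of_lt_of_le hω (le_prob p hp.1 _ ω)
      positivity
    · rw [← Finset.sum_fiberwise_of_maps_to
          (s := Finset.univ) (g := fun ω => ((X₁ ω, X₂ ω), Y ω))
          (t := Finset.image (fun ω => ((X₁ ω, X₂ ω), Y ω)) Finset.univ)
          (fun ω _ => Finset.mem_image_of_mem _ (Finset.mem_univ ω))
          (fun ω => p ω * (P12 (X₁ ω, X₂ ω) * P2Y (X₂ ω, Y ω)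
            / (P2 (X₂ ω) * PT ((X₁ ω, X₂ ω), Y ω))))]
      have step1 : ∀ t ∈ Finset.image (fun ω => ((X₁ ω, X₂ ω), Y ω)) Finset.univ,
          ∑ ω ∈ Finset.univ.filter (fun ω => ((X₁ ω, X₂ ω), Y ω) = t),
            p ω * (P12 (X₁ ω, X₂ ω) * P2Y (X₂ ω, Y ω)
              / (P2 (X₂ ω) * PT ((X₁ ω, X₂ ω), Y ω)))
          ≤ P12 t.1 * P2Y (t.1.2, t.2) / P2 t.1.2 := by
        intro t ht
        have heq : ∑ ω ∈ Finset.univ.filter (fun ω => ((X₁ ω, X₂ ω), Y ω) = t),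
            p ω * (P12 (X₁ ω, X₂ ω) * P2Y (X₂ ω, Y ω)
              / (P2 (X₂ ω) * PT ((X₁ ω, X₂ ω), Y ω)))
            = (∑ ω ∈ Finset.univ.filter (fun ω => ((X₁ ω, X₂ ω), Y ω) = t), p ω)
                * (P12 t.1 * P2Y (t.1.2, t.2) / (P2 t.1.2 * PT t)) := by
          rw [Finset.sum_mul]
          refine Finset.sum_congr rfl fun ω hω => ?_
          have h := (Finset.mem_filter.mp hω).2
          have h12 : (X₁ ω, X₂ ω) = t.1 := by rw [← h]
          have h2 : X₂ ω = t.1.2 := by rw [← h12]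
          have hy : Y ω = t.2 := by rw [← h]
          rw [h, h12, h2, hy]
        have hPTt : PT t = ∑ ω ∈ Finset.univ.filter
            (fun ω => ((X₁ ω, X₂ ω), Y ω) = t), p ω := rfl
        rw [heq, ← hPTt]
        rcases eq_or_lt_of_le
            (prob_nonneg p hp.1 (fun ω => ((X₁ ω, X₂ ω), Y ω)) t : (0:ℝ) ≤ PT t) with h0 | h0
        · have h0' : PT t = 0 := h0.symm
          rw [h0']
          simpa using hg0 t
        · rcases eq_or_lt_of_le (prob_nonneg p hp.1 X₂ t.1.2 : (0:ℝ) ≤ P2 t.1.2) with hb | hb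
          · have hb' : P2 t.1.2 = 0 := hb.symm
            rw [hb']
            simp
          · rw [show PT t * (P12 t.1 * P2Y (t.1.2, t.2) / (P2 t.1.2 * PT t))
                = P12 t.1 * P2Y (t.1.2, t.2) / P2 t.1.2 by
              have hPTne : PT t ≠ 0 := ne_of_gt h0
              have hP2ne : P2 t.1.2 ≠ 0 := ne_of_gt hb
              field_simp]
      calc ∑ t ∈ Finset.image (fun ω => ((X₁ ω, X₂ ω), Y ω)) Finset.univ,
            ∑ ω ∈ Finset.univ.filter (fun ω => ((X₁ ω, X₂ ω), Y ω) = t),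
              p ω * (P12 (X₁ ω, X₂ ω) * P2Y (X₂ ω, Y ω)
                / (P2 (X₂ ω) * PT ((X₁ ω, X₂ ω), Y ω)))
          ≤ ∑ t ∈ Finset.image (fun ω => ((X₁ ω, X₂ ω), Y ω)) Finset.univ,
              P12 t.1 * P2Y (t.1.2, t.2) / P2 t.1.2 := Finset.sum_le_sum step1
        _ ≤ ∑ t ∈ ((Finset.image X₁ Finset.univ ×ˢ Finset.image X₂ Finset.univ)
              ×ˢ Finset.image Y Finset.univ),
              P12 t.1 * P2Y (t.1.2, t.2) / P2 t.1.2 := by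
            refine Finset.sum_le_sum_of_subset_of_nonneg ?_ (fun t _ _ => hg0 t)
            intro t ht
            obtain ⟨ω, _, hω⟩ := Finset.mem_image.mp ht
            rw [← hω]
            exact Finset.mk_mem_product
              (Finset.mk_mem_product (Finset.mem_image_of_mem X₁ (Finset.mem_univ ω))
                (Finset.mem_image_of_mem X₂ (Finset.mem_univ ω)))
              (Finset.mem_image_of_mem Y (Finset.mem_univ ω))
        _ ≤ 1 := by
            rw [Finset.sum_product]
            have hinner : ∀ q ∈ Finset.image X₁ Finset.univ ×ˢ Finset.image X₂ Finset.univ,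
                ∑ y ∈ Finset.image Y Finset.univ, P12 q * P2Y (q.2, y) / P2 q.2 ≤ P12 q := by
              intro q hq
              have hmarg : ∑ y ∈ Finset.image Y Finset.univ, P2Y (q.2, y) = P2 q.2 :=
                marginal_right p X₂ Y q.2
              have : ∑ y ∈ Finset.image Y Finset.univ, P12 q * P2Y (q.2, y) / P2 q.2
                  = P12 q * P2 q.2 / P2 q.2 := by
                rw [← hmarg, Finset.mul_sum, ← Finset.sum_div]
              rw [this]
              rcases eq_or_lt_of_le (prob_nonneg p hp.1 X₂ q.2 : (0:ℝ) ≤ P2 q.2) with hb | hb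
              · have hb' : P2 q.2 = 0 := hb.symm
                rw [hb']
                simpa using prob_nonneg p hp.1 _ q
              · rw [mul_div_assoc, div_self (ne_of_gt hb), mul_one]
            calc ∑ q ∈ Finset.image X₁ Finset.univ ×ˢ Finset.image X₂ Finset.univ,
                  ∑ y ∈ Finset.image Y Finset.univ, P12 q * P2Y (q.2, y) / P2 q.2
                ≤ ∑ q ∈ Finset.image X₁ Finset.univ ×ˢ Finset.image X₂ Finset.univ, P12 q :=
                  Finset.sum_le_sum hinner
              _ = ∑ q ∈ Finset.image (fun ω => (X₁ ω, X₂ ω)) Finset.univ, P12 q := by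
                  refine (Finset.sum_subset ?_ ?_).symm
                  · intro q hq
                    obtain ⟨ω, _, hω⟩ := Finset.mem_image.mp hq
                    rw [← hω]
                    exact Finset.mk_mem_product
                      (Finset.mem_image_of_mem X₁ (Finset.mem_univ ω))
                      (Finset.mem_image_of_mem X₂ (Finset.mem_univ ω))
                  · intro q _ hq
                    exact prob_eq_zero_of_not_mem p _ hq
              _ = 1 := sum_prob p hp _
  -- convert to entropies
  rw [ent_eq, ent_eq, ent_eq, ent_eq, ← sub_nonneg]
  have hconv : ∑ ω, -(p ω * Real.log (P12 (X₁ ω, X₂ ω)))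
      + ∑ ω, -(p ω * Real.log (P2Y (X₂ ω, Y ω)))
      - (∑ ω, -(p ω * Real.log (P2 (X₂ ω)))
        + ∑ ω, -(p ω * Real.log (PT ((X₁ ω, X₂ ω), Y ω))))
      = -∑ ω, p ω * Real.log
          (P12 (X₁ ω, X₂ ω) * P2Y (X₂ ω, Y ω) / (P2 (X₂ ω) * PT ((X₁ ω, X₂ ω), Y ω))) := by
    rw [← Finset.sum_add_distrib, ← Finset.sum_add_distrib, ← Finset.sum_sub_distrib,
      ← Finset.sum_neg_distrib]
    refine Finset.sum_congr rfl fun ω _ => ?_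
    rcases eq_or_lt_of_le (hp.1 ω) with h0 | h0
    · rw [← h0]; ring
    · have h1 : 0 < P12 (X₁ ω, X₂ ω) := lt_of_lt_of_le h0 (le_prob p hp.1 _ ω)
      have h2 : 0 < P2Y (X₂ ω, Y ω) := lt_of_lt_of_le h0 (le_prob p hp.1 _ ω)
      have h3 : 0 < P2 (X₂ ω) := lt_of_lt_of_le h0 (le_prob p hp.1 _ ω)
      have h4 : 0 < PT ((X₁ ω, X₂ ω), Y ω) := lt_of_lt_of_le h0 (le_prob p hp.1 _ ω)
      rw [Real.log_div (by positivity) (by positivity),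
        Real.log_mul (ne_of_gt h1) (ne_of_gt h2), Real.log_mul (ne_of_gt h3) (ne_of_gt h4)]
      ring
  linarith [neg_nonneg.mpr key, hconv]

lemma ent_mono_right (hp : ∀ ω, 0 ≤ p ω) (X : Ω → α) (Y : Ω → β) :
    ent p Y ≤ ent p (fun ω => (X ω, Y ω)) := by
  have h := ent_mono_left p hp Y X
  have hswap : ent p (fun ω => (Y ω, X ω)) = ent p (fun ω => (X ω, Y ω)) :=
    ent_congr p (fun ω₁ ω₂ => by simp [Prod.ext_iff, and_comm])
  linarith

lemma MI_nonneg (hp : IsPMF p) (X : Ω → α) (Y : Ω → β) : 0 ≤ MI p X Y := by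
  have := ent_pair_le p hp X Y
  unfold MI
  linarith

lemma MI_le_ent_left (hp : IsPMF p) (X : Ω → α) (Y : Ω → β) : MI p X Y ≤ ent p X := by
  have := ent_mono_right p hp.1 X Y
  unfold MI
  linarith

lemma MI_le_ent_right (hp : IsPMF p) (X : Ω → α) (Y : Ω → β) : MI p X Y ≤ ent p Y := by
  have := ent_mono_left p hp.1 X Y
  unfold MI
  linarith

end Aux

section MIlemmas
variable {Ω : Type} [Fintype Ω] (p : Ω → ℝ)

lemma ent_joint_eq (X₁ X₂ : RV Ω) :
    ent p (joint X₁ X₂) = ent p (fun ω => (X₁ ω, X₂ ω)) :=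
  ent_congr p fun ω₁ ω₂ => by simp [joint, Nat.pair_eq_pair, Prod.ext_iff]

lemma ent_joint_pair_eq (X₁ X₂ Y : RV Ω) :
    ent p (fun ω => (joint X₁ X₂ ω, Y ω)) = ent p (fun ω => ((X₁ ω, X₂ ω), Y ω)) :=
  ent_congr p fun ω₁ ω₂ => by simp [joint, Nat.pair_eq_pair, Prod.ext_iff, and_assoc]

lemma MI_right_le_MI_joint (hp : IsPMF p) (X₁ X₂ Y : RV Ω) :
    MI p X₂ Y ≤ MI p (joint X₁ X₂) Y := by
  have hssa := ent_ssa p hp X₁ X₂ Y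
  unfold MI
  rw [ent_joint_eq, ent_joint_pair_eq]
  linarith

lemma MI_left_le_MI_joint (hp : IsPMF p) (X₁ X₂ Y : RV Ω) :
    MI p X₁ Y ≤ MI p (joint X₁ X₂) Y := by
  have hssa := ent_ssa p hp X₂ X₁ Y
  have e1 : ent p (fun ω => (X₂ ω, X₁ ω)) = ent p (fun ω => (X₁ ω, X₂ ω)) :=
    ent_congr p fun ω₁ ω₂ => by simp [Prod.ext_iff, and_comm]
  have e2 : ent p (fun ω => ((X₂ ω, X₁ ω), Y ω)) = ent p (fun ω => ((X₁ ω, X₂ ω), Y ω)) :=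
    ent_congr p fun ω₁ ω₂ => by
      simp only [Prod.ext_iff]
      tauto
  unfold MI
  rw [ent_joint_eq, ent_joint_pair_eq]
  linarith

end MIlemmas

/-- The Rescaled Redundancy satisfies Global Positivity and is bounded
above by the minimum marginal mutual information:
`0 ≤ I_RR(X₁,X₂;Y) ≤ min(I(X₁;Y), I(X₂;Y))`. -/
theorem rescaled_redundancy_global_positivity_and_upper_bound
    {Ω : Type} [Fintype Ω] (p : Ω → ℝ) (hp : IsPMF p)
    (X₁ X₂ Y : RV Ω) (h₁ : 0 < ent p X₁) (h₂ : 0 < ent p X₂) :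
    0 ≤ IRR p X₁ X₂ Y ∧ IRR p X₁ X₂ Y ≤ min (MI p X₁ Y) (MI p X₂ Y) := by
  have hMI1 : 0 ≤ MI p X₁ Y := MI_nonneg p hp X₁ Y
  have hMI2 : 0 ≤ MI p X₂ Y := MI_nonneg p hp X₂ Y
  have hMIs : 0 ≤ MI p X₁ X₂ := MI_nonneg p hp X₁ X₂
  have hle1 : MI p X₁ X₂ ≤ ent p X₁ := MI_le_ent_left p hp X₁ X₂
  have hle2 : MI p X₁ X₂ ≤ ent p X₂ := MI_le_ent_right p hp X₁ X₂
  have hminpos : 0 < min (ent p X₁) (ent p X₂) := lt_min h₁ h₂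
  have hIs0 : 0 ≤ Isrc p X₁ X₂ := div_nonneg hMIs hminpos.le
  have hIs1 : Isrc p X₁ X₂ ≤ 1 := by
    rw [Isrc, div_le_one hminpos]
    exact le_min hle1 hle2
  have hcoi1 : coi p X₁ X₂ Y ≤ MI p X₁ Y := by
    have := MI_right_le_MI_joint p hp X₁ X₂ Y
    unfold coi
    linarith
  have hcoi2 : coi p X₁ X₂ Y ≤ MI p X₂ Y := by
    have := MI_left_le_MI_joint p hp X₁ X₂ Y
    unfold coi
    linarith
  have hR0 : 0 ≤ Rmin p X₁ X₂ Y := le_max_left 0 _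
  have hRle : Rmin p X₁ X₂ Y ≤ RMMI p X₁ X₂ Y :=
    max_le (le_min hMI1 hMI2) (le_min hcoi1 hcoi2)
  have hd : 0 ≤ RMMI p X₁ X₂ Y - Rmin p X₁ X₂ Y := sub_nonneg.mpr hRle
  have hprod0 : 0 ≤ Isrc p X₁ X₂ * (RMMI p X₁ X₂ Y - Rmin p X₁ X₂ Y) := mul_nonneg hIs0 hd
  have hprod1 : Isrc p X₁ X₂ * (RMMI p X₁ X₂ Y - Rmin p X₁ X₂ Y)
      ≤ RMMI p X₁ X₂ Y - Rmin p X₁ X₂ Y := mul_le_of_le_one_left hd hIs1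
  constructor
  · rw [IRR]
    linarith
  · have : IRR p X₁ X₂ Y ≤ RMMI p X₁ X₂ Y := by rw [IRR]; linarith
    exact this.trans_eq rfl
end
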